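/- For every four-times differentiable function ψ : ℝ → ℂ², the following operator identities hold pointwise: (i) P̂(P̂ψ) = −ψ″; (ii) D₊(D₊ψ) = −ψ″; (iii) P¹(P¹ψ) = ψ; (iv) P̂(D₊ψ) = D₊(P̂ψ); (v) P̂(P¹ψ) + P¹(P̂ψ) = 0; (vi) D₊(P¹ψ) + P¹(D₊ψ) = 0. (These are the (anti)commutation relations making the span of Id, H_sch = −(1/β)∂², P̂, D₊, P¹ close as the ℤ₂³-graded colour Lie superalgebra 𝔇: both P̂ and D₊ square to β·H_sch, P¹ squares to the identity, P̂ and D₊ commute, and P¹ anticommutes with both P̂ and D₊.) -/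

import Mathlib

open Matrix

noncomputable section

/-- The gamma matrix `γ¹ = [[1,0],[0,−1]]`. -/
def γ1 : Matrix (Fin 2) (Fin 2) ℂ := !![1, 0; 0, -1]

/-- The gamma matrix `γ₊ = [[0,1],[0,0]]`. -/
def γp : Matrix (Fin 2) (Fin 2) ℂ := !![0, 1; 0, 0]

/-- The gamma matrix `γ₋ = [[0,0],[1,0]]`. -/
def γm : Matrix (Fin 2) (Fin 2) ℂ := !![0, 0; 1, 0]

/-- `ψ : ℝ → ℂ²` solves the free time-independent Lévy-Leblond equation
with `γ₊`-eigenvalue `E`: `ψ` is differentiable and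
`β γ₋ ψ(x) − i γ¹ ψ′(x) = E γ₊ ψ(x)` for all `x`. -/
def SolvesLL (β E : ℝ) (ψ : ℝ → (Fin 2 → ℂ)) : Prop :=
  Differentiable ℝ ψ ∧
    ∀ x : ℝ, (β : ℂ) • γm.mulVec (ψ x) - Complex.I • γ1.mulVec (deriv ψ x)
      = (E : ℂ) • γp.mulVec (ψ x)

/-- The operator `P̂`: `(P̂ψ)(x) = −i ψ′(x)`. -/
def Phat (ψ : ℝ → (Fin 2 → ℂ)) : ℝ → (Fin 2 → ℂ) :=
  fun x => (-Complex.I) • deriv ψ x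

/-- The operator `D₊`: `(D₊ψ)(x) = −(1/β) γ₊ ψ″(x) + β γ₋ ψ(x)`. -/
def Dplus (β : ℝ) (ψ : ℝ → (Fin 2 → ℂ)) : ℝ → (Fin 2 → ℂ) :=
  fun x => (-(1 / (β : ℂ))) • γp.mulVec (deriv (deriv ψ) x) + (β : ℂ) • γm.mulVec (ψ x)

/-- The operator `P¹`: `(P¹ψ)(x) = γ¹ ψ(−x)`. -/
def P1 (ψ : ℝ → (Fin 2 → ℂ)) : ℝ → (Fin 2 → ℂ) :=
  fun x => γ1.mulVec (ψ (-x))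

lemma hasDerivAt_mulVec' (A : Matrix (Fin 2) (Fin 2) ℂ) {f : ℝ → Fin 2 → ℂ} {f' : Fin 2 → ℂ} {x : ℝ}
    (hf : HasDerivAt f f' x) : HasDerivAt (fun y => A.mulVec (f y)) (A.mulVec f') x := by
  have := ((A.mulVecLin.restrictScalars ℝ).toContinuousLinearMap).hasFDerivAt.comp_hasDerivAt x hf
  simpa [Function.comp_def] using this

lemma hasDerivAt_comp_neg' {f : ℝ → Fin 2 → ℂ} {f' : Fin 2 → ℂ} {x : ℝ}
    (hf : HasDerivAt f f' (-x)) : HasDerivAt (fun y => f (-y)) (-f') x := by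
  have := HasDerivAt.scomp x hf (hasDerivAt_neg x)
  simpa [Function.comp_def] using this

/-- For every four-times differentiable `ψ : ℝ → ℂ²`, the operators
`P̂`, `D₊`, `P¹` satisfy the (anti)commutation relations of the ℤ₂³-graded colour Lie
superalgebra 𝔇:  `P̂² = D₊² = −∂²` (i.e. `β·H_sch`), `(P¹)² = Id`, `[P̂, D₊] = 0`,
`{P̂, P¹} = 0` and `{D₊, P¹} = 0`. -/
theorem colour_relations (β : ℝ) (hβ : 0 < β) (ψ : ℝ → (Fin 2 → ℂ))
    (hψ1 : Differentiable ℝ ψ)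
    (hψ2 : Differentiable ℝ (deriv ψ))
    (hψ3 : Differentiable ℝ (deriv (deriv ψ)))
    (hψ4 : Differentiable ℝ (deriv (deriv (deriv ψ)))) :
    (∀ x : ℝ, Phat (Phat ψ) x = -(deriv (deriv ψ) x)) ∧
    (∀ x : ℝ, Dplus β (Dplus β ψ) x = -(deriv (deriv ψ) x)) ∧
    (∀ x : ℝ, P1 (P1 ψ) x = ψ x) ∧
    (∀ x : ℝ, Phat (Dplus β ψ) x = Dplus β (Phat ψ) x) ∧
    (∀ x : ℝ, Phat (P1 ψ) x + P1 (Phat ψ) x = 0) ∧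
    (∀ x : ℝ, Dplus β (P1 ψ) x + P1 (Dplus β ψ) x = 0) := by
  have hβ0 : (β : ℂ) ≠ 0 := by exact_mod_cast hβ.ne'
  set c : ℂ := -(1 / (β : ℂ)) with hc
  -- derivative of Phat ψ
  have hdPhat : deriv (Phat ψ) = fun x => (-Complex.I) • deriv (deriv ψ) x := by
    funext x
    exact (((hψ2 x).hasDerivAt).const_smul (-Complex.I)).deriv
  have hddPhat : deriv (deriv (Phat ψ)) = fun x => (-Complex.I) • deriv (deriv (deriv ψ)) x := by
    rw [hdPhat]; funext x
    exact (((hψ3 x).hasDerivAt).const_smul (-Complex.I)).deriv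
  -- derivative of Dplus β ψ
  have hdD : deriv (Dplus β ψ)
      = fun x => c • γp.mulVec (deriv (deriv (deriv ψ)) x) + (β : ℂ) • γm.mulVec (deriv ψ x) := by
    funext x
    exact (((hasDerivAt_mulVec' γp (hψ3 x).hasDerivAt).const_smul c).add
      ((hasDerivAt_mulVec' γm (hψ1 x).hasDerivAt).const_smul ((β : ℂ)))).deriv
  have hddD : deriv (deriv (Dplus β ψ))
      = fun x => c • γp.mulVec (deriv (deriv (deriv (deriv ψ))) x)
          + (β : ℂ) • γm.mulVec (deriv (deriv ψ) x) := by
    rw [hdD]; funext x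
    exact (((hasDerivAt_mulVec' γp (hψ4 x).hasDerivAt).const_smul c).add
      ((hasDerivAt_mulVec' γm (hψ2 x).hasDerivAt).const_smul ((β : ℂ)))).deriv
  -- derivative of P1 ψ
  have hdP1 : deriv (P1 ψ) = fun x => γ1.mulVec (-(deriv ψ (-x))) := by
    funext x
    exact (hasDerivAt_mulVec' γ1 (hasDerivAt_comp_neg' (hψ1 (-x)).hasDerivAt)).deriv
  have hddP1 : deriv (deriv (P1 ψ)) = fun x => γ1.mulVec (deriv (deriv ψ) (-x)) := by
    rw [hdP1]; funext x
    have : HasDerivAt (fun y => γ1.mulVec (-(deriv ψ (-y)))) (γ1.mulVec (deriv (deriv ψ) (-x))) x := by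
      have h1 : HasDerivAt (fun y => deriv ψ (-y)) (-(deriv (deriv ψ) (-x))) x :=
        hasDerivAt_comp_neg' (hψ2 (-x)).hasDerivAt
      have h2 := (h1.neg)
      simpa using hasDerivAt_mulVec' γ1 h2
    exact this.deriv
  refine ⟨?_, ?_, ?_, ?_, ?_, ?_⟩
  · intro x
    have e : Phat (Phat ψ) x = (-Complex.I) • deriv (Phat ψ) x := rfl
    rw [e, hdPhat]
    funext i
    simp [smul_smul]
    ring_nf
    simp [Complex.I_sq]
  · intro x
    have e : Dplus β (Dplus β ψ) x
        = c • γp.mulVec (deriv (deriv (Dplus β ψ)) x) + (β : ℂ) • γm.mulVec (Dplus β ψ x) := rfl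
    rw [e, hddD]
    funext i
    fin_cases i <;>
      simp [Dplus, γp, γm, Matrix.mulVec, dotProduct, Fin.sum_univ_two, hc] <;>
      field_simp
  · intro x
    simp only [P1, neg_neg]
    funext i
    fin_cases i <;> simp [γ1, Matrix.mulVec, dotProduct, Fin.sum_univ_two]
  · intro x
    have e1 : Phat (Dplus β ψ) x = (-Complex.I) • deriv (Dplus β ψ) x := rfl
    have e2 : Dplus β (Phat ψ) x
        = c • γp.mulVec (deriv (deriv (Phat ψ)) x) + (β : ℂ) • γm.mulVec (Phat ψ x) := rfl
    rw [e1, e2, hdD, hddPhat]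
    funext i
    fin_cases i <;>
      simp [Phat, γp, γm, Matrix.mulVec, dotProduct, Fin.sum_univ_two, hc] <;> ring
  · intro x
    have e : Phat (P1 ψ) x = (-Complex.I) • deriv (P1 ψ) x := rfl
    rw [e, hdP1]
    funext i
    fin_cases i <;>
      simp [Phat, P1, γ1, Matrix.mulVec, dotProduct, Fin.sum_univ_two] <;> ring
  · intro x
    have e : Dplus β (P1 ψ) x
        = c • γp.mulVec (deriv (deriv (P1 ψ)) x) + (β : ℂ) • γm.mulVec (P1 ψ x) := rfl
    rw [e, hddP1]
    funext i
    fin_cases i <;>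
      simp [Dplus, P1, γ1, γp, γm, Matrix.mulVec, dotProduct, Fin.sum_univ_two, hc] <;>
      ring

end
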